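/- Let f_d = Σ_{i=1}^m c_i x^{α_i} − d·x^β ∈ ℝ[x_1,…,x_n] with α_i ∈ (2ℕ)^n and c_i > 0 for i = 1,…,m, and suppose β lies on the boundary ∂New(f_d) of the Newton polytope of f_d. Let F be the face of New(f_d) containing β. Then f_d is nonnegative on ℝ^n if and only if the restriction of f_d to the face F (i.e. the sum of those terms of f_d whose exponents lie in F) is nonnegative on ℝ^n. -/

import Mathlib

open MvPolynomial Classical

noncomputable section

/-- The real point associated to an exponent vector. -/
def toR {n : ℕ} (α : Fin n →₀ ℕ) : Fin n → ℝ := fun j => (α j : ℝ)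

/-- A lattice point is even if all its coordinates are even, i.e. it lies in `(2ℕ)^n`. -/
def IsEvenPt {n : ℕ} (α : Fin n →₀ ℕ) : Prop := ∀ j, Even (α j)

/-- The Newton polytope of a polynomial: the convex hull of its support. -/
def newton {n : ℕ} (f : MvPolynomial (Fin n) ℝ) : Set (Fin n → ℝ) :=
  convexHull ℝ (toR '' (f.support : Set (Fin n →₀ ℕ)))

/-- A polynomial is nonnegative (PSD) if it is nonnegative at every real point. -/
def Nonneg {n : ℕ} (f : MvPolynomial (Fin n) ℝ) : Prop :=
  ∀ x : Fin n → ℝ, 0 ≤ eval x f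

/-- The restriction of `f` to a face `F` of its Newton polytope: the sum of those terms of `f`
whose exponents lie in `F`. -/
def restrictTo {n : ℕ} (f : MvPolynomial (Fin n) ℝ) (F : Set (Fin n → ℝ)) :
    MvPolynomial (Fin n) ℝ :=
  ∑ a ∈ f.support, if toR a ∈ F then monomial a (f.coeff a) else 0


open Finset Filter

def dot {n : ℕ} (w x : Fin n → ℝ) : ℝ := ∑ j, w j * x j

lemma dot_add_left {n : ℕ} (w v x : Fin n → ℝ) : dot (w + v) x = dot w x + dot v x := by
  simp [dot, add_mul, Finset.sum_add_distrib]
lemma dot_smul_left {n : ℕ} (c : ℝ) (w x : Fin n → ℝ) : dot (c • w) x = c * dot w x := by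
  simp [dot, Finset.mul_sum, mul_assoc]
lemma dot_zero_left {n : ℕ} (x : Fin n → ℝ) : dot 0 x = 0 := by simp [dot]
lemma dot_add_right {n : ℕ} (w x y : Fin n → ℝ) : dot w (x + y) = dot w x + dot w y := by
  simp [dot, mul_add, Finset.sum_add_distrib]
lemma dot_smul_right {n : ℕ} (c : ℝ) (w x : Fin n → ℝ) : dot w (c • x) = c * dot w x := by
  simp [dot, Finset.mul_sum]
  exact Finset.sum_congr rfl fun j _ => by ring
lemma dot_sub_right {n : ℕ} (w x y : Fin n → ℝ) : dot w (x - y) = dot w x - dot w y := by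
  simp [dot, mul_sub, Finset.sum_sub_distrib]
lemma dot_sum_right {n : ℕ} {ι : Type*} (s : Finset ι) (w : Fin n → ℝ) (t : ι → ℝ)
    (y : ι → Fin n → ℝ) : dot w (∑ i ∈ s, t i • y i) = ∑ i ∈ s, t i * dot w (y i) := by
  classical
  induction s using Finset.induction with
  | empty => simp [dot]
  | insert _ _ hx ih =>
    rw [Finset.sum_insert hx, dot_add_right, dot_smul_right, ih, Finset.sum_insert hx]


theorem farkas {V : Type*} [AddCommGroup V] [Module ℝ V]
    (p : V →ₗ[ℝ] V →ₗ[ℝ] ℝ) (hp : ∀ v : V, v ≠ 0 → 0 < p v v) :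
    ∀ (k : ℕ) (v : Fin k → V) (b : V),
      (¬ ∃ s : Fin k → ℝ, (∀ i, 0 ≤ s i) ∧ ∑ i, s i • v i = b) →
      ∃ w : V, (∀ i, p w (v i) ≤ 0) ∧ 0 < p w b := by
  intro k
  induction k with
  | zero =>
    intro v b hb
    have hb0 : b ≠ 0 := by
      rintro rfl
      exact hb ⟨Fin.elim0, fun i => i.elim0, by simp⟩
    exact ⟨b, fun i => i.elim0, hp b hb0⟩
  | succ k ih =>
    intro v b hb
    have h1 : ¬ ∃ s : Fin k → ℝ, (∀ i, 0 ≤ s i) ∧ ∑ i, s i • v (Fin.castSucc i) = b := by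
      rintro ⟨s, hs, hsum⟩
      refine hb ⟨Fin.snoc s 0, ?_, ?_⟩
      · intro i
        refine Fin.lastCases ?_ (fun j => ?_) i <;> simp [hs, Fin.snoc_castSucc]
      · rw [Fin.sum_univ_castSucc]
        simp [Fin.snoc_castSucc, hsum]
    obtain ⟨w, hw, hwb⟩ := ih (fun i => v (Fin.castSucc i)) b h1
    by_cases hlast : p w (v (Fin.last k)) ≤ 0
    · refine ⟨w, fun i => ?_, hwb⟩
      refine Fin.lastCases hlast (fun j => hw j) i
    · push_neg at hlast
      set q := p w (v (Fin.last k)) with hq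
      set v' : Fin k → V := fun i =>
        v (Fin.castSucc i) - (p w (v (Fin.castSucc i)) / q) • v (Fin.last k) with hv'
      set b' : V := b - (p w b / q) • v (Fin.last k) with hb'
      have h2 : ¬ ∃ s : Fin k → ℝ, (∀ i, 0 ≤ s i) ∧ ∑ i, s i • v' i = b' := by
        rintro ⟨s, hs, hsum⟩
        set r : ℝ := (p w b - ∑ i, s i * p w (v (Fin.castSucc i))) / q with hr
        have hrpos : 0 < r := by
          apply div_pos _ hlast
          have : ∑ i, s i * p w (v (Fin.castSucc i)) ≤ 0 :=
            Finset.sum_nonpos fun i _ => mul_nonpos_of_nonneg_of_nonpos (hs i) (hw i)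
          linarith
        refine hb ⟨Fin.snoc s r, ?_, ?_⟩
        · intro i
          refine Fin.lastCases ?_ (fun j => ?_) i <;> simp [hs, hrpos.le, Fin.snoc_castSucc]
        · rw [Fin.sum_univ_castSucc]
          simp only [Fin.snoc_castSucc, Fin.snoc_last]
          have expand : ∑ i, s i • v (Fin.castSucc i)
              = b' + (∑ i, s i * (p w (v (Fin.castSucc i)) / q)) • v (Fin.last k) := by
            rw [← hsum]
            simp only [hv', smul_sub, Finset.sum_sub_distrib, smul_smul]
            rw [← Finset.sum_smul]
            abel
          rw [expand, hb', hr]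
          have hcoef : -((p w) b / q) + (∑ i, s i * ((p w) (v (Fin.castSucc i)) / q))
              + ((p w) b - ∑ i, s i * (p w) (v (Fin.castSucc i))) / q = 0 := by
            simp only [← mul_div_assoc]
            rw [← Finset.sum_div, sub_div]
            ring
          have hmod : b - ((p w) b / q) • v (Fin.last k)
              + (∑ i, s i * ((p w) (v (Fin.castSucc i)) / q)) • v (Fin.last k)
              + (((p w) b - ∑ i, s i * (p w) (v (Fin.castSucc i))) / q) • v (Fin.last k)
              = b + (-((p w) b / q) + (∑ i, s i * ((p w) (v (Fin.castSucc i)) / q))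
              + ((p w) b - ∑ i, s i * (p w) (v (Fin.castSucc i))) / q) • v (Fin.last k) := by
            module
          rw [hmod, hcoef, zero_smul, add_zero]
      obtain ⟨w', hw', hwb'⟩ := ih v' b' h2
      refine ⟨w' - (p w' (v (Fin.last k)) / q) • w, fun i => ?_, ?_⟩
      · refine Fin.lastCases ?_ (fun j => ?_) i
        · simp only [map_sub, LinearMap.sub_apply, LinearMap.smul_apply, map_smul,
            smul_eq_mul]
          rw [← hq, div_mul_cancel₀ _ hlast.ne']
          simp
        · have := hw' j
          simp only [hv', map_sub, map_smul, LinearMap.sub_apply, LinearMap.smul_apply,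
            smul_eq_mul] at this ⊢
          have hcomm : (p w') (v (Fin.last k)) / q * (p w) (v (Fin.castSucc j))
              = (p w) (v (Fin.castSucc j)) / q * (p w') (v (Fin.last k)) := by ring
          rw [hcomm]
          linarith [this]
      · have := hwb'
        simp only [hb', map_sub, map_smul, LinearMap.sub_apply, LinearMap.smul_apply,
          smul_eq_mul] at this ⊢
        have hcomm : (p w') (v (Fin.last k)) / q * (p w) b
            = (p w) b / q * (p w') (v (Fin.last k)) := by ring
        rw [hcomm]
        linarith [this]

section FarkasPrime
variable {V : Type*} [AddCommGroup V] [Module ℝ V]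

theorem farkas' (p : V →ₗ[ℝ] V →ₗ[ℝ] ℝ) (hp : ∀ v : V, v ≠ 0 → 0 < p v v)
    (ι : Type*) [Fintype ι] (v : ι → V) (b : V)
    (h : ¬ ∃ s : ι → ℝ, (∀ i, 0 ≤ s i) ∧ ∑ i, s i • v i = b) :
    ∃ w : V, (∀ i, p w (v i) ≤ 0) ∧ 0 < p w b := by
  obtain ⟨e⟩ : Nonempty (ι ≃ Fin (Fintype.card ι)) := ⟨Fintype.equivFin ι⟩
  obtain ⟨w, hw, hwb⟩ := farkas p hp (Fintype.card ι) (v ∘ e.symm) b (by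
    rintro ⟨s, hs, hsum⟩
    refine h ⟨s ∘ e, fun i => hs _, ?_⟩
    rw [← hsum]
    exact Fintype.sum_equiv e _ _ (fun i => by simp))
  exact ⟨w, fun i => by simpa using hw (e i), hwb⟩


end FarkasPrime

/-- The bilinear pairing on `(Fin n → ℝ) × ℝ`. -/
def pairW (n : ℕ) : ((Fin n → ℝ) × ℝ) →ₗ[ℝ] ((Fin n → ℝ) × ℝ) →ₗ[ℝ] ℝ :=
  LinearMap.mk₂ ℝ (fun w x => dot w.1 x.1 + w.2 * x.2)
    (fun a b c => by simp only [Prod.fst_add, Prod.snd_add, dot_add_left]; ring)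
    (fun c a b => by
      simp only [Prod.smul_fst, Prod.smul_snd, dot_smul_left, smul_eq_mul]; ring)
    (fun a b c => by simp only [Prod.fst_add, Prod.snd_add, dot_add_right]; ring)
    (fun c a b => by
      simp only [Prod.smul_fst, Prod.smul_snd, dot_smul_right, smul_eq_mul]; ring)

lemma pairW_apply {n : ℕ} (w x : (Fin n → ℝ) × ℝ) :
    pairW n w x = dot w.1 x.1 + w.2 * x.2 := rfl

lemma pairW_posdef (n : ℕ) : ∀ v : (Fin n → ℝ) × ℝ, v ≠ 0 → 0 < pairW n v v := by
  intro v hv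
  have h1 : (0:ℝ) ≤ dot v.1 v.1 := Finset.sum_nonneg fun j _ => mul_self_nonneg _
  have h2 : (0:ℝ) ≤ v.2 * v.2 := mul_self_nonneg _
  have hne : dot v.1 v.1 + v.2 * v.2 ≠ 0 := by
    intro h
    apply hv
    have hd : dot v.1 v.1 = 0 := by linarith
    have hv2 : v.2 = 0 := by nlinarith
    have hv1 : v.1 = 0 := by
      funext j
      have h3 : v.1 j * v.1 j = 0 :=
        (Finset.sum_eq_zero_iff_of_nonneg (fun j _ => mul_self_nonneg (v.1 j))).1 hd
          j (Finset.mem_univ j)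
      simpa using mul_self_eq_zero.1 h3
    exact Prod.ext hv1 hv2
  rw [pairW_apply]
  exact lt_of_le_of_ne (by linarith) (Ne.symm hne)


/-- Duality lemma: if no convex representation of `β` by points of `A` puts positive
weight on `a0`, then there is a supporting functional strict at `a0`. -/
lemma lemD {n : ℕ} (A : Finset (Fin n → ℝ)) (β a0 : Fin n → ℝ) (ha0 : a0 ∈ A)
    (H : ∀ t : (Fin n → ℝ) → ℝ, (∀ y ∈ A, 0 ≤ t y) → (∑ y ∈ A, t y) = 1 →
      (∑ y ∈ A, t y • y) = β → t a0 = 0) :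
    ∃ w : Fin n → ℝ, (∀ a ∈ A, dot w a ≤ dot w β) ∧ dot w a0 < dot w β := by
  classical
  set v : ({x // x ∈ A} ⊕ Unit) → (Fin n → ℝ) × ℝ :=
    Sum.elim (fun a => ((a : Fin n → ℝ) - β, 0)) (fun _ => (a0 - β, 1)) with hv
  have hnr : ¬ ∃ s : ({x // x ∈ A} ⊕ Unit) → ℝ,
      (∀ i, 0 ≤ s i) ∧ ∑ i, s i • v i = ((0 : Fin n → ℝ), (1:ℝ)) := by
    rintro ⟨s, hs, hsum⟩
    rw [Fintype.sum_sum_type] at hsum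
    set t0 : (Fin n → ℝ) → ℝ := fun y => if h : y ∈ A then s (Sum.inl ⟨y, h⟩) else 0 with ht0
    have ht0nn : ∀ y, 0 ≤ t0 y := by
      intro y
      simp only [ht0]
      split <;> [exact hs _; exact le_refl 0]
    have hsubsum : ∑ a : {x // x ∈ A}, s (Sum.inl a) • v (Sum.inl a)
        = ∑ y ∈ A, t0 y • ((y - β, 0) : (Fin n → ℝ) × ℝ) := by
      rw [← Finset.sum_coe_sort A (fun y => t0 y • ((y - β, 0) : (Fin n → ℝ) × ℝ))]
      refine Finset.sum_congr rfl fun a _ => ?_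
      have h2 : t0 ↑a = s (Sum.inl a) := by simp only [ht0]; rw [dif_pos a.2]
      simp [hv, h2]
    rw [hsubsum] at hsum
    simp only [hv, Sum.elim_inr, Finset.univ_unique, Finset.sum_singleton] at hsum
    set μ := s (Sum.inr ()) with hμ
    have hfst := congrArg Prod.fst hsum
    have hsnd := congrArg Prod.snd hsum
    simp only [Prod.fst_add, Prod.snd_add, Prod.fst_sum, Prod.snd_sum, Prod.smul_fst,
      Prod.smul_snd, smul_eq_mul, mul_zero, mul_one, Finset.sum_const_zero, zero_add,
      Finset.univ_unique, Finset.sum_singleton] at hfst hsnd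
    -- hsnd : μ = 1
    set S := ∑ y ∈ A, t0 y with hS
    have hSnn : 0 ≤ S := Finset.sum_nonneg fun y _ => ht0nn y
    have hS1 : (0:ℝ) < S + 1 := by linarith
    have hexp : ∑ y ∈ A, t0 y • (y - β) = (∑ y ∈ A, t0 y • y) - S • β := by
      rw [hS, Finset.sum_smul]
      rw [← Finset.sum_sub_distrib]
      exact Finset.sum_congr rfl fun y _ => smul_sub _ _ _
    rw [hexp, hsnd, one_smul] at hfst
    have hkey : (∑ y ∈ A, t0 y • y) + a0 = (S + 1) • β := by
      have : (∑ y ∈ A, t0 y • y) - S • β + (a0 - β) = 0 := hfst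
      have h2 : (∑ y ∈ A, t0 y • y) + a0 = S • β + β := by
        apply eq_of_sub_eq_zero
        rw [← this]; abel
      rw [h2, add_smul, one_smul]
    set t : (Fin n → ℝ) → ℝ := fun y => (t0 y + if y = a0 then 1 else 0) / (S + 1) with ht
    have h1 : ∀ y ∈ A, 0 ≤ t y := by
      intro y _
      rw [ht]
      apply div_nonneg _ hS1.le
      have := ht0nn y
      split <;> linarith
    have h2 : ∑ y ∈ A, t y = 1 := by
      rw [ht]
      rw [← Finset.sum_div, Finset.sum_add_distrib, Finset.sum_ite_eq' A a0 (fun _ => (1:ℝ)),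
        if_pos ha0, ← hS]
      field_simp
    have h3 : ∑ y ∈ A, t y • y = β := by
      simp only [ht]
      have hcong : ∀ y ∈ A, ((t0 y + if y = a0 then 1 else 0) / (S + 1)) • y
          = (S+1)⁻¹ • (t0 y • y + (if y = a0 then (1:ℝ) else 0) • y) := by
        intro y _
        rw [div_eq_inv_mul, mul_smul, add_smul]
      rw [Finset.sum_congr rfl hcong, ← Finset.smul_sum, Finset.sum_add_distrib]
      simp only [ite_smul, one_smul, zero_smul, Finset.sum_ite_eq' A a0 (fun y => y), if_pos ha0]
      rw [hkey, smul_smul, inv_mul_cancel₀ hS1.ne', one_smul]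
    have := H t h1 h2 h3
    rw [ht] at this
    simp only [if_pos rfl] at this
    have ha0nn := ht0nn a0
    have : t0 a0 + 1 = 0 := by
      field_simp at this
      norm_num at this
      linarith [this]
    linarith
  obtain ⟨w, hw, hwb⟩ := farkas' (pairW n) (pairW_posdef n) _ v ((0:Fin n → ℝ), (1:ℝ)) hnr
  refine ⟨w.1, fun a ha => ?_, ?_⟩
  · have h := hw (Sum.inl ⟨a, ha⟩)
    rw [pairW_apply] at h
    simp only [hv, Sum.elim_inl, mul_zero, add_zero] at h
    rw [dot_sub_right] at h
    linarith
  · have h0 := hw (Sum.inr ())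
    rw [pairW_apply] at h0
    rw [pairW_apply] at hwb
    simp only [hv, Sum.elim_inr, mul_one] at h0
    rw [dot_sub_right] at h0
    have : dot w.1 (0 : Fin n → ℝ) = 0 := by simp [dot]
    rw [this, mul_one, zero_add] at hwb
    linarith

/-- If some convex representation of a point of an extreme set `F` puts positive weight on a
vertex `a0`, then `a0 ∈ F`. -/
lemma extreme_mem_of_pos_weight {n : ℕ} (A : Finset (Fin n → ℝ)) (F : Set (Fin n → ℝ))
    (hF : IsExtreme ℝ (convexHull ℝ (A : Set (Fin n → ℝ))) F) (β : Fin n → ℝ) (hβF : β ∈ F)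
    (t : (Fin n → ℝ) → ℝ) (htnn : ∀ y ∈ A, 0 ≤ t y) (ht1 : (∑ y ∈ A, t y) = 1)
    (htβ : (∑ y ∈ A, t y • y) = β) (a0 : Fin n → ℝ) (ha0 : a0 ∈ A) (hpos : 0 < t a0) :
    a0 ∈ F := by
  classical
  set s := t a0 with hs
  have hs1 : s ≤ 1 := by
    rw [← ht1]
    exact Finset.single_le_sum htnn ha0
  have herase : s + ∑ y ∈ A.erase a0, t y = 1 := by
    rw [hs, Finset.add_sum_erase A t ha0, ht1]
  have herasev : s • a0 + ∑ y ∈ A.erase a0, t y • y = β := by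
    rw [hs, Finset.add_sum_erase A (fun y => t y • y) ha0, htβ]
  by_cases hseq : s = 1
  · -- all other weights vanish, so β = a0
    have hz : ∑ y ∈ A.erase a0, t y = 0 := by rw [hseq] at herase; linarith
    have hz' : ∀ y ∈ A.erase a0, t y = 0 := by
      intro y hy
      exact (Finset.sum_eq_zero_iff_of_nonneg
        (fun y hy => htnn y (Finset.mem_of_mem_erase hy))).1 hz y hy
    have : β = a0 := by
      rw [← herasev, Finset.sum_eq_zero (fun y hy => by rw [hz' y hy, zero_smul]), add_zero,
        hseq, one_smul]
    rw [← this]; exact hβF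
  · have hslt : s < 1 := lt_of_le_of_ne hs1 hseq
    have h1s : (0:ℝ) < 1 - s := by linarith
    set z : Fin n → ℝ := (1 - s)⁻¹ • (β - s • a0) with hz
    have hzA : z ∈ convexHull ℝ (A : Set (Fin n → ℝ)) := by
      rw [Finset.mem_convexHull']
      refine ⟨fun y => (if y = a0 then 0 else t y) / (1 - s), fun y hy => ?_, ?_, ?_⟩
      · apply div_nonneg _ h1s.le
        split
        · exact le_refl 0
        · exact htnn y hy
      · rw [← Finset.sum_div]
        rw [← Finset.sum_erase_add A _ ha0, if_pos rfl, add_zero]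
        rw [Finset.sum_congr rfl (fun y hy => if_neg (Finset.ne_of_mem_erase hy))]
        rw [div_eq_one_iff_eq h1s.ne']
        linarith [herase]
      · have : ∀ y ∈ A, ((if y = a0 then 0 else t y) / (1 - s)) • y
            = (1-s)⁻¹ • ((if y = a0 then 0 else t y) • y) := by
          intro y _
          rw [div_eq_inv_mul, mul_smul]
        rw [Finset.sum_congr rfl this, ← Finset.smul_sum, hz]
        congr 1
        rw [← Finset.sum_erase_add A _ ha0, if_pos rfl, zero_smul, add_zero]
        rw [Finset.sum_congr rfl
          (fun y hy => by rw [if_neg (Finset.ne_of_mem_erase hy)])]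
        exact eq_sub_of_add_eq (by rw [add_comm]; exact herasev)
    have hseg : β ∈ openSegment ℝ a0 z := by
      refine ⟨s, 1 - s, hpos, h1s, by ring, ?_⟩
      rw [hz, smul_inv_smul₀ h1s.ne']
      abel
    exact hF.2 (subset_convexHull ℝ (A : Set (Fin n → ℝ)) ha0) hzA hβF hseg

lemma lemM {n : ℕ} : ∀ (N : ℕ) (A : Finset (Fin n → ℝ)), A.card ≤ N → ∀ (β : Fin n → ℝ)
    (F : Set (Fin n → ℝ)), β ∈ convexHull ℝ (A : Set (Fin n → ℝ)) →
    IsExtreme ℝ (convexHull ℝ (A : Set (Fin n → ℝ))) F → β ∈ F →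
    ∃ w : Fin n → ℝ, ∀ a ∈ A, dot w a ≤ dot w β ∧ (dot w a = dot w β → a ∈ F) := by
  classical
  intro N
  induction N with
  | zero =>
    intro A hA β F hβ _ _
    rw [Nat.le_zero, Finset.card_eq_zero] at hA
    rw [hA] at hβ
    simp at hβ
  | succ N ih =>
    intro A hA β F hβ hF hβF
    by_cases hAF : ∀ a ∈ A, a ∈ F
    · exact ⟨0, fun a ha => ⟨by rw [dot_zero_left, dot_zero_left], fun _ => hAF a ha⟩⟩
    push_neg at hAF
    obtain ⟨a0, ha0, ha0F⟩ := hAF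
    have H : ∀ t : (Fin n → ℝ) → ℝ, (∀ y ∈ A, 0 ≤ t y) → (∑ y ∈ A, t y) = 1 →
        (∑ y ∈ A, t y • y) = β → t a0 = 0 := by
      intro t htnn ht1 htβ
      by_contra h
      exact ha0F (extreme_mem_of_pos_weight A F hF β hβF t htnn ht1 htβ a0 ha0
        (lt_of_le_of_ne (htnn a0 ha0) (Ne.symm h)))
    obtain ⟨w0, hw0, hs0⟩ := lemD A β a0 ha0 H
    set A' : Finset (Fin n → ℝ) := A.filter (fun a => dot w0 a = dot w0 β) with hA'
    have ha0A' : a0 ∉ A' := by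
      rw [hA', Finset.mem_filter]
      rintro ⟨-, h⟩
      exact absurd h (ne_of_lt hs0)
    have hss : A' ⊂ A := ⟨Finset.filter_subset _ _, fun hsub => ha0A' (hsub ha0)⟩
    have hcard : A'.card ≤ N := Nat.lt_succ_iff.1 (lt_of_lt_of_le (Finset.card_lt_card hss) hA)
    -- β ∈ convexHull A'
    obtain ⟨t, htnn, ht1, htβ⟩ := Finset.mem_convexHull'.1 hβ
    have e1 : ∑ y ∈ A, t y * dot w0 y = dot w0 β := by rw [← dot_sum_right, htβ]
    have hsum0 : ∑ y ∈ A, t y * (dot w0 β - dot w0 y) = 0 := by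
      simp only [mul_sub]
      rw [Finset.sum_sub_distrib, ← Finset.sum_mul, ht1, e1, one_mul, sub_self]
    have hzero : ∀ y ∈ A, y ∉ A' → t y = 0 := by
      intro y hy hyA'
      have hterm := (Finset.sum_eq_zero_iff_of_nonneg (fun y hy =>
        mul_nonneg (htnn y hy) (by linarith [hw0 y hy]))).1 hsum0 y hy
      rcases mul_eq_zero.1 hterm with h | h
      · exact h
      · exfalso
        apply hyA'
        rw [hA', Finset.mem_filter]
        exact ⟨hy, by linarith⟩
    have hβ' : β ∈ convexHull ℝ (A' : Set (Fin n → ℝ)) := by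
      rw [Finset.mem_convexHull']
      refine ⟨t, fun y hy => htnn y (Finset.filter_subset _ _ hy), ?_, ?_⟩
      · rw [Finset.sum_subset (Finset.filter_subset _ A) (fun y hy hny => hzero y hy hny)]
        exact ht1
      · rw [Finset.sum_subset (Finset.filter_subset _ A)
          (fun y hy hny => by rw [hzero y hy hny, zero_smul])]
        exact htβ
    have hsubhull : convexHull ℝ (A' : Set (Fin n → ℝ)) ⊆ convexHull ℝ (A : Set (Fin n → ℝ)) :=
      convexHull_mono (by exact_mod_cast Finset.filter_subset _ A)
    have hF' : IsExtreme ℝ (convexHull ℝ (A' : Set (Fin n → ℝ)))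
        (F ∩ convexHull ℝ (A' : Set (Fin n → ℝ))) := by
      constructor
      · exact Set.inter_subset_right
      · intro x1 hx1 x2 hx2 x hx hseg
        have h1 := hF.2 (hsubhull hx1) (hsubhull hx2) hx.1 hseg
        exact ⟨h1, hx1⟩
    obtain ⟨w1, hw1⟩ := ih A' hcard β (F ∩ convexHull ℝ (A' : Set (Fin n → ℝ))) hβ' hF'
      ⟨hβF, hβ'⟩
    -- choose the tilting constant M
    have hne : (A \ A').Nonempty := ⟨a0, Finset.mem_sdiff.2 ⟨ha0, ha0A'⟩⟩
    set g : (Fin n → ℝ) → ℝ := fun a => (dot w1 a - dot w1 β) / (dot w0 β - dot w0 a) with hg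
    set M : ℝ := ((A \ A').image g).max' (hne.image g) + 1 with hM
    have hMgt : ∀ a ∈ A \ A', g a < M := by
      intro a ha
      have := Finset.le_max' _ (g a) (Finset.mem_image_of_mem g ha)
      rw [hM]; linarith
    refine ⟨w1 + M • w0, fun a ha => ?_⟩
    have hda : dot (w1 + M • w0) a = dot w1 a + M * dot w0 a := by
      rw [dot_add_left, dot_smul_left]
    have hdβ : dot (w1 + M • w0) β = dot w1 β + M * dot w0 β := by
      rw [dot_add_left, dot_smul_left]
    by_cases haA' : a ∈ A'
    · have he : dot w0 a = dot w0 β := (Finset.mem_filter.1 haA').2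
      obtain ⟨hle, himp⟩ := hw1 a haA'
      constructor
      · rw [hda, hdβ, he]; linarith
      · intro h
        rw [hda, hdβ, he] at h
        exact (himp (by linarith)).1
    · have hlt : dot w0 a < dot w0 β :=
        lt_of_le_of_ne (hw0 a ha) (fun h => haA' (Finset.mem_filter.2 ⟨ha, h⟩))
      have hga := hMgt a (Finset.mem_sdiff.2 ⟨ha, haA'⟩)
      rw [hg] at hga
      have hstrict : dot w1 a - dot w1 β < M * (dot w0 β - dot w0 a) := by
        have hpos : 0 < dot w0 β - dot w0 a := by linarith
        calc dot w1 a - dot w1 β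
            = ((dot w1 a - dot w1 β) / (dot w0 β - dot w0 a)) * (dot w0 β - dot w0 a) := by
              field_simp
          _ < M * (dot w0 β - dot w0 a) := by
              exact mul_lt_mul_of_pos_right hga hpos
      have hfin : dot (w1 + M • w0) a < dot (w1 + M • w0) β := by
        rw [hda, hdβ]; linarith
      exact ⟨le_of_lt hfin, fun h => absurd h (ne_of_lt hfin)⟩

lemma toR_injective {n : ℕ} : Function.Injective (toR (n := n)) := by
  intro a b h
  ext j
  exact Nat.cast_injective (congrFun h j)

lemma term_nonneg {n : ℕ} {a : Fin n →₀ ℕ} (ha : IsEvenPt a) {c : ℝ} (hc : 0 ≤ c)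
    (x : Fin n → ℝ) : 0 ≤ c * ∏ j, x j ^ a j :=
  mul_nonneg hc (Finset.prod_nonneg fun j _ => (ha j).pow_nonneg _)

/-- coefficients of `f` away from `β` are positive with even exponents -/
lemma coeff_structure {n m : ℕ} (c : Fin m → ℝ) (α : Fin m → (Fin n →₀ ℕ)) (β : Fin n →₀ ℕ)
    (d : ℝ) (hα : ∀ i, IsEvenPt (α i)) (hc : ∀ i, 0 < c i)
    (f : MvPolynomial (Fin n) ℝ)
    (hf : f = (∑ i, monomial (α i) (c i)) - monomial β d)
    {γ : Fin n →₀ ℕ} (hγ : γ ∈ f.support) (hγβ : γ ≠ β) :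
    0 < f.coeff γ ∧ IsEvenPt γ := by
  have hco : f.coeff γ = ∑ i ∈ Finset.univ.filter (fun i => α i = γ), c i := by
    rw [hf]
    rw [MvPolynomial.coeff_sub, MvPolynomial.coeff_sum]
    rw [MvPolynomial.coeff_monomial, if_neg (fun h => hγβ (by rw [h]) )]
    rw [sub_zero]
    rw [Finset.sum_filter]
    refine Finset.sum_congr rfl fun i _ => ?_
    rw [MvPolynomial.coeff_monomial]
  have hne : (Finset.univ.filter (fun i => α i = γ)).Nonempty := by
    by_contra h
    rw [Finset.not_nonempty_iff_eq_empty] at h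
    rw [MvPolynomial.mem_support_iff, hco, h, Finset.sum_empty] at hγ
    exact hγ rfl
  constructor
  · rw [hco]
    exact Finset.sum_pos (fun i _ => hc i) hne
  · obtain ⟨i, hi⟩ := hne
    rw [Finset.mem_filter] at hi
    rw [← hi.2]
    exact hα i

/-- the scaling / limit argument -/
lemma scaling_nonneg {n : ℕ} (f : MvPolynomial (Fin n) ℝ) (hN : Nonneg f)
    (w : Fin n → ℝ) (b : ℝ) (hmax : ∀ a ∈ f.support, dot w (toR a) ≤ b) (x : Fin n → ℝ) :
    0 ≤ ∑ a ∈ f.support.filter (fun a => dot w (toR a) = b),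
      f.coeff a * ∏ j, x j ^ a j := by
  set G : ℝ → ℝ := fun t => ∑ a ∈ f.support,
    (f.coeff a * ∏ j, x j ^ a j) * t ^ (dot w (toR a) - b) with hG
  have hlim : Tendsto G atTop (nhds (∑ a ∈ f.support,
      if dot w (toR a) = b then f.coeff a * ∏ j, x j ^ a j else 0)) := by
    apply tendsto_finset_sum
    intro a ha
    by_cases hab : dot w (toR a) = b
    · rw [if_pos hab]
      have : ∀ᶠ t : ℝ in atTop, (f.coeff a * ∏ j, x j ^ a j) * t ^ (dot w (toR a) - b)
          = f.coeff a * ∏ j, x j ^ a j := by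
        filter_upwards [eventually_gt_atTop (0:ℝ)] with t ht
        rw [hab, sub_self, Real.rpow_zero, mul_one]
      exact Tendsto.congr' (this.mono fun t h => h.symm) tendsto_const_nhds
    · rw [if_neg hab]
      have hlt : dot w (toR a) - b < 0 := lt_of_le_of_ne (by linarith [hmax a ha]) (by
        intro h; exact hab (by linarith))
      have h1 : Tendsto (fun t : ℝ => t ^ (dot w (toR a) - b)) atTop (nhds 0) := by
        have := tendsto_rpow_neg_atTop (y := -(dot w (toR a) - b)) (by linarith)
        simpa using this
      have := h1.const_mul (f.coeff a * ∏ j, x j ^ a j)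
      simpa using this
  have hpos : ∀ᶠ t : ℝ in atTop, 0 ≤ G t := by
    filter_upwards [eventually_gt_atTop (0:ℝ)] with t ht
    have hGt : G t = t ^ (-b) * eval (fun j => t ^ (w j) * x j) f := by
      rw [hG, MvPolynomial.eval_eq']
      rw [Finset.mul_sum]
      refine Finset.sum_congr rfl fun a ha => ?_
      have hprod : ∏ j, (t ^ (w j) * x j) ^ a j
          = t ^ (dot w (toR a)) * ∏ j, x j ^ a j := by
        rw [dot, Real.rpow_sum_of_pos ht]
        rw [← Finset.prod_mul_distrib]
        refine Finset.prod_congr rfl fun j _ => ?_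
        rw [mul_pow]
        congr 1
        rw [← Real.rpow_natCast (t ^ w j) (a j), ← Real.rpow_mul ht.le]
        rfl
      rw [hprod]
      rw [Real.rpow_sub ht]
      rw [Real.rpow_neg ht.le]
      field_simp
    rw [hGt]
    exact mul_nonneg (Real.rpow_nonneg ht.le _) (hN _)
  have := ge_of_tendsto hlim hpos
  rwa [Finset.sum_filter]



lemma eval_monomial' {n : ℕ} (x : Fin n → ℝ) (a : Fin n →₀ ℕ) (c : ℝ) :
    eval x (monomial a c) = c * ∏ j, x j ^ a j := by
  rw [MvPolynomial.eval_monomial]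
  congr 1
  exact Finsupp.prod_fintype _ _ (fun j => pow_zero _)

lemma eval_restrictTo {n : ℕ} (f : MvPolynomial (Fin n) ℝ) (F : Set (Fin n → ℝ))
    (x : Fin n → ℝ) : eval x (restrictTo f F)
      = ∑ a ∈ f.support.filter (fun a => toR a ∈ F), f.coeff a * ∏ j, x j ^ a j := by
  rw [restrictTo, map_sum]
  have hcong : ∀ a ∈ f.support, eval x (if toR a ∈ F then monomial a (f.coeff a) else 0)
      = if toR a ∈ F then f.coeff a * ∏ j, x j ^ a j else 0 := by
    intro a _
    split <;> simp [eval_monomial']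
  rw [Finset.sum_congr rfl hcong, ← Finset.sum_filter]

/-- If `f_d = ∑ c_i x^{α_i} − d x^β` with even `α_i`, `c_i > 0`, and `β` on the
boundary of the Newton polytope of `f_d`, and `F` is a face of `New(f_d)` containing `β`, then
`f_d` is nonnegative iff its restriction to `F` is nonnegative. -/
theorem stmt0 {n m : ℕ} (c : Fin m → ℝ) (α : Fin m → (Fin n →₀ ℕ)) (β : Fin n →₀ ℕ) (d : ℝ)
    (hα : ∀ i, IsEvenPt (α i)) (hc : ∀ i, 0 < c i)
    (f : MvPolynomial (Fin n) ℝ)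
    (hf : f = (∑ i, monomial (α i) (c i)) - monomial β d)
    (hβ : toR β ∈ frontier (newton f))
    (F : Set (Fin n → ℝ)) (hF : IsExtreme ℝ (newton f) F) (hβF : toR β ∈ F) :
    Nonneg f ↔ Nonneg (restrictTo f F) := by
  classical
  set A : Finset (Fin n → ℝ) := f.support.image toR with hA
  have hAnewton : newton f = convexHull ℝ (A : Set (Fin n → ℝ)) := by
    rw [newton, hA, Finset.coe_image]
  rw [hAnewton] at hF
  -- a nonzero term whose exponent is not β is pointwise nonnegative
  have hterm : ∀ a ∈ f.support, a ≠ β → ∀ x : Fin n → ℝ, 0 ≤ f.coeff a * ∏ j, x j ^ a j := by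
    intro a ha hne x
    obtain ⟨hpos, heven⟩ := coeff_structure c α β d hα hc f hf ha hne
    exact term_nonneg heven hpos.le x
  constructor
  · -- hard direction
    intro hN x
    rw [Nonneg] at *
    by_cases hβs : β ∈ f.support
    · have hβhull : toR β ∈ convexHull ℝ (A : Set (Fin n → ℝ)) :=
        subset_convexHull ℝ _ (by exact_mod_cast Finset.mem_image_of_mem toR hβs)
      obtain ⟨w, hw⟩ := lemM A.card A le_rfl (toR β) F hβhull hF hβF
      set b := dot w (toR β) with hb
      have hmax : ∀ a ∈ f.support, dot w (toR a) ≤ b := fun a ha =>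
        (hw (toR a) (Finset.mem_image_of_mem toR ha)).1
      have hS := scaling_nonneg f hN w b hmax x
      set S := f.support.filter (fun a => dot w (toR a) = b) with hSdef
      set T := f.support.filter (fun a => toR a ∈ F) with hTdef
      have hST : S ⊆ T := by
        intro a haS
        rw [hSdef, Finset.mem_filter] at haS
        rw [hTdef, Finset.mem_filter]
        exact ⟨haS.1, (hw (toR a) (Finset.mem_image_of_mem toR haS.1)).2 haS.2⟩
      rw [eval_restrictTo, ← hTdef, ← Finset.sum_sdiff hST]
      apply add_nonneg _ hS
      apply Finset.sum_nonneg
      intro a haTS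
      rw [Finset.mem_sdiff] at haTS
      obtain ⟨haT, haS⟩ := haTS
      rw [hTdef, Finset.mem_filter] at haT
      have hane : a ≠ β := by
        intro h
        apply haS
        rw [hSdef, Finset.mem_filter]
        exact ⟨haT.1, by rw [h]⟩
      exact hterm a haT.1 hane x
    · rw [eval_restrictTo]
      apply Finset.sum_nonneg
      intro a ha
      rw [Finset.mem_filter] at ha
      have hane : a ≠ β := fun h => hβs (h ▸ ha.1)
      exact hterm a ha.1 hane x
  · -- easy direction
    intro hN x
    have hevf : eval x f = ∑ a ∈ f.support, f.coeff a * ∏ j, x j ^ a j :=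
      MvPolynomial.eval_eq' x f
    set T := f.support.filter (fun a => toR a ∈ F) with hTdef
    rw [hevf, ← Finset.sum_sdiff (Finset.filter_subset (fun a => toR a ∈ F) f.support)]
    apply add_nonneg
    · apply Finset.sum_nonneg
      intro a haTS
      rw [Finset.mem_sdiff] at haTS
      obtain ⟨ha, haT⟩ := haTS
      have hane : a ≠ β := by
        intro h
        apply haT
        rw [Finset.mem_filter]
        exact ⟨ha, by rw [h]; exact hβF⟩
      exact hterm a ha hane x
    · rw [← eval_restrictTo]
      exact hN x
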